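/- Let θ : Fin d → ℝ, let S(x) = ∑_{|n| ≤ M} ŝ(n) e(nx) be a real trigonometric polynomial of degree at most M with S(x) ≥ χ_I(x) for all x, where χ_I is the indicator of an interval containing 0. Then the number of pairs (i,j) with θ i = θ j (including i = j) is at most ∑_{|n| ≤ M} |ŝ(n)| · |∑_i e(n θ i)|². -/

import Mathlib

open Complex Finset in
theorem stmt_6 (d M : ℕ) (θ : Fin d → ℝ) (I : Set ℝ) (hI : (0 : ℝ) ∈ I)
    (S : ℝ → ℝ) (shat : ℤ → ℂ)
    (hS : ∀ x : ℝ, (S x : ℂ) = ∑ n ∈ Finset.Icc (-(M : ℤ)) (M : ℤ),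
        shat n * Complex.exp (2 * Real.pi * Complex.I * (n * x)))
    (hmaj : ∀ x : ℝ, Set.indicator I (fun _ => (1 : ℝ)) x ≤ S x) :
    ((Finset.univ.filter (fun q : Fin d × Fin d => θ q.1 = θ q.2)).card : ℝ)
      ≤ ∑ n ∈ Finset.Icc (-(M : ℤ)) (M : ℤ), ‖shat n‖ *
          ‖∑ i : Fin d,
            Complex.exp (2 * Real.pi * Complex.I * (n * θ i))‖ ^ 2 := by
  classical
  set T : ℤ → ℂ := fun n => ∑ i : Fin d, Complex.exp (2 * Real.pi * Complex.I * (n * θ i))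
    with hT
  have hSnn : ∀ x, 0 ≤ S x := fun x =>
    le_trans (Set.indicator_nonneg (fun _ _ => zero_le_one) x) (hmaj x)
  have h1 : ((Finset.univ.filter (fun q : Fin d × Fin d => θ q.1 = θ q.2)).card : ℝ)
      ≤ ∑ q : Fin d × Fin d, S (θ q.1 - θ q.2) := by
    calc ((Finset.univ.filter (fun q : Fin d × Fin d => θ q.1 = θ q.2)).card : ℝ)
        = ∑ q ∈ Finset.univ.filter (fun q : Fin d × Fin d => θ q.1 = θ q.2), (1 : ℝ) := by
          simp
      _ ≤ ∑ q ∈ Finset.univ.filter (fun q : Fin d × Fin d => θ q.1 = θ q.2),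
            S (θ q.1 - θ q.2) := by
          apply Finset.sum_le_sum
          intro q hq
          simp only [Finset.mem_filter] at hq
          rw [hq.2, sub_self]
          have := hmaj 0
          rwa [Set.indicator_of_mem hI] at this
      _ ≤ ∑ q : Fin d × Fin d, S (θ q.1 - θ q.2) :=
          Finset.sum_le_sum_of_subset_of_nonneg (Finset.filter_subset _ _)
            (fun q _ _ => hSnn _)
  have hconj : ∀ (n : ℤ) (y : ℝ),
      (starRingEnd ℂ) (Complex.exp (2 * Real.pi * Complex.I * (n * y)))
        = Complex.exp (-(2 * Real.pi * Complex.I * (n * y))) := by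
    intro n y
    rw [← Complex.exp_conj]
    congr 1
    simp only [map_mul, Complex.conj_I, Complex.conj_ofReal, map_ofNat, map_intCast]
    ring
  have h2 : ((∑ q : Fin d × Fin d, S (θ q.1 - θ q.2) : ℝ) : ℂ)
      = ∑ n ∈ Finset.Icc (-(M : ℤ)) (M : ℤ), shat n * (T n * (starRingEnd ℂ) (T n)) := by
    push_cast
    simp only [hS]
    rw [Finset.sum_comm]
    refine Finset.sum_congr rfl fun n _ => ?_
    rw [← Finset.mul_sum]
    congr 1
    rw [hT]
    simp only [map_sum, Finset.sum_mul_sum]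
    rw [Fintype.sum_prod_type]
    refine Finset.sum_congr rfl fun i _ => Finset.sum_congr rfl fun j _ => ?_
    rw [hconj, ← Complex.exp_add]
    congr 1
    push_cast
    ring
  have h3 : (∑ q : Fin d × Fin d, S (θ q.1 - θ q.2) : ℝ)
      ≤ ∑ n ∈ Finset.Icc (-(M : ℤ)) (M : ℤ), ‖shat n‖ * ‖T n‖ ^ 2 := by
    calc (∑ q : Fin d × Fin d, S (θ q.1 - θ q.2) : ℝ)
        ≤ ‖((∑ q : Fin d × Fin d, S (θ q.1 - θ q.2) : ℝ) : ℂ)‖ := by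
          rw [Complex.norm_real, Real.norm_eq_abs]; exact le_abs_self _
      _ = ‖∑ n ∈ Finset.Icc (-(M : ℤ)) (M : ℤ),
            shat n * (T n * (starRingEnd ℂ) (T n))‖ := by rw [h2]
      _ ≤ ∑ n ∈ Finset.Icc (-(M : ℤ)) (M : ℤ),
            ‖shat n * (T n * (starRingEnd ℂ) (T n))‖ :=
          norm_sum_le _ _
      _ = ∑ n ∈ Finset.Icc (-(M : ℤ)) (M : ℤ),
            ‖shat n‖ * ‖T n‖ ^ 2 := by
          refine Finset.sum_congr rfl fun n _ => ?_
          rw [norm_mul, norm_mul, Complex.norm_conj, sq]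
  exact le_trans h1 h3
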